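/- In the two-group factor-model setup, suppose α₁ = α₂ = α, p₁(n)/p₂(n) → C for some C > 0, and a_{1,p₁(n)} / a_{2,p₂(n)} → a for some constant a > 0. Then, for every x > 0, P(Q_{p₁(n), p₂(n)} ≤ a_{1,p₁(n)} x) → Ψ_α(x) · Ψ_α(a x) as n → ∞. (Proposition 2, Case 2, first subcase.) -/

import Mathlib

open MeasureTheory ProbabilityTheory Filter

noncomputable section

/-- The Fréchet distribution function with tail index `α`. -/
def frechetCDF (α x : ℝ) : ℝ := if 0 < x then Real.exp (-x ^ (-α)) else 0

/-- The norming constant `a_p = (Σ_{i<p} σ_i^α)^{1/α}`. -/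
def normConst (σ : ℕ → ℝ) (α : ℝ) (p : ℕ) : ℝ :=
  (∑ i ∈ Finset.range p, σ i ^ α) ^ (1 / α)

/-- Maximum of the first `p₁` variables of the first group and the first `p₂`
variables of the second group. -/
def Qmax {Ω : Type*} (X₁ X₂ : ℕ → Ω → ℝ) (p₁ p₂ : ℕ) (ω : Ω) : ℝ :=
  max (⨆ i : Fin p₁, X₁ i ω) (⨆ j : Fin p₂, X₂ j ω)

/-- Codomains of the family consisting of the factor `Z` and the two noise arrays. -/
def mixCodom (d : ℕ) : Unit ⊕ ℕ ⊕ ℕ → Type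
  | Sum.inl _ => Fin d → ℝ
  | Sum.inr _ => ℝ

instance mixCodomMeasurableSpace (d : ℕ) : ∀ i, MeasurableSpace (mixCodom d i)
  | Sum.inl _ => inferInstanceAs (MeasurableSpace (Fin d → ℝ))
  | Sum.inr (Sum.inl _) => inferInstanceAs (MeasurableSpace ℝ)
  | Sum.inr (Sum.inr _) => inferInstanceAs (MeasurableSpace ℝ)

/-- The family consisting of the factor `Z` and the two noise arrays. -/
def mixFun {Ω : Type*} {d : ℕ} (Z : Ω → Fin d → ℝ) (ε₁ ε₂ : ℕ → Ω → ℝ) :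
    ∀ i : Unit ⊕ ℕ ⊕ ℕ, Ω → mixCodom d i
  | Sum.inl _ => Z
  | Sum.inr (Sum.inl i) => ε₁ i
  | Sum.inr (Sum.inr j) => ε₂ j

lemma one_sub_le_exp_neg' (u : ℝ) : 1 - u ≤ Real.exp (-u) := by
  have := Real.add_one_le_exp (-u); linarith

lemma exp_neg_div_le_one_sub' {u : ℝ} (h1 : u < 1) :
    Real.exp (-(u / (1 - u))) ≤ 1 - u := by
  have h1' : 0 < 1 - u := by linarith
  have h2 : 1 / (1 - u) ≤ Real.exp (u / (1 - u)) := by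
    have := Real.add_one_le_exp (u / (1 - u))
    calc 1 / (1 - u) = u / (1 - u) + 1 := by field_simp; ring
    _ ≤ _ := this
  rw [Real.exp_neg, inv_le_comm₀ (Real.exp_pos _) h1', ← one_div]
  exact h2

lemma rpow_anti {α x y : ℝ} (hα : 0 < α) (hx : 0 < x) (hxy : x ≤ y) :
    y ^ (-α) ≤ x ^ (-α) := by
  rw [Real.rpow_neg hx.le, Real.rpow_neg (hx.trans_le hxy).le]
  exact inv_anti₀ (Real.rpow_pos_of_pos hx α) (Real.rpow_le_rpow hx.le hxy hα.le)

lemma tendsto_of_squeeze_param' {f : ℕ → ℝ} {L : ℝ}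
    (h : ∀ δ : ℝ, 0 < δ → ∃ (lo hi : ℕ → ℝ) (l u : ℝ),
      Tendsto lo atTop (nhds l) ∧ Tendsto hi atTop (nhds u) ∧
      L - δ ≤ l ∧ u ≤ L + δ ∧ (∀ᶠ n in atTop, lo n ≤ f n ∧ f n ≤ hi n)) :
    Tendsto f atTop (nhds L) := by
  refine tendsto_order.2 ⟨fun b hb => ?_, fun b hb => ?_⟩
  · obtain ⟨lo, hi, l, u, hlo, _, hl, _, hev⟩ := h ((L - b)/2) (by linarith)
    filter_upwards [hlo.eventually_const_lt (show b < l by linarith), hev] with n h1 h2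
    linarith [h2.1]
  · obtain ⟨lo, hi, l, u, _, hhi, _, hu, hev⟩ := h ((b - L)/2) (by linarith)
    filter_upwards [hhi.eventually_lt_const (show u < b by linarith), hev] with n h1 h2
    linarith [h2.2]

lemma core_prod_tendsto
    (α : ℝ) (hα : 0 < α)
    (S : ℝ → ℝ) (hS0 : ∀ y, 0 ≤ S y)
    (htail : Tendsto (fun y => y ^ α * S y) atTop (nhds 1))
    (C₁ C₂ : ℝ) (hC₁ : 0 < C₁) (σ : ℕ → ℝ) (hσ : ∀ i, σ i ∈ Set.Icc C₁ C₂)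
    (M : ℝ) (hM : 0 ≤ M) (c : ℕ → ℝ) (hc : ∀ i, |c i| ≤ M)
    (p : ℕ → ℕ) (hppos : ∀ n, 0 < p n)
    (t : ℕ → ℝ) (s : ℝ) (hs : 0 < s)
    (hts : Tendsto (fun n => t n / (∑ i ∈ Finset.range (p n), σ i ^ α) ^ (1/α)) atTop (nhds s))
    (hbtop : Tendsto (fun n => (∑ i ∈ Finset.range (p n), σ i ^ α) ^ (1/α)) atTop atTop) :
    Tendsto (fun n => ∏ i ∈ Finset.range (p n), (1 - S ((t n - c i) / σ i))) atTop
      (nhds (Real.exp (-s ^ (-α)))) := by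
  set L := Real.exp (-s ^ (-α)) with hL
  set b := fun n => (∑ i ∈ Finset.range (p n), σ i ^ α) ^ (1/α : ℝ) with hbdef
  have hσpos : ∀ i, 0 < σ i := fun i => hC₁.trans_le (hσ i).1
  have hsumpos : ∀ n, 0 < ∑ i ∈ Finset.range (p n), σ i ^ α := by
    intro n
    refine Finset.sum_pos (fun i _ => Real.rpow_pos_of_pos (hσpos i) α) ?_
    exact Finset.nonempty_range_iff.2 (hppos n).ne'
  have hbpos : ∀ n, 0 < b n := fun n => Real.rpow_pos_of_pos (hsumpos n) _
  have hbα : ∀ n, b n ^ α = ∑ i ∈ Finset.range (p n), σ i ^ α := by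
    intro n
    show ((∑ i ∈ Finset.range (p n), σ i ^ α) ^ (1/α : ℝ)) ^ α = _
    rw [← Real.rpow_mul (hsumpos n).le, one_div, inv_mul_cancel₀ hα.ne', Real.rpow_one]
  -- t tends to infinity
  have httop : Tendsto t atTop atTop := by
    have h1 : Tendsto (fun n => (t n / b n) * b n) atTop atTop :=
      Tendsto.pos_mul_atTop hs hts hbtop
    refine h1.congr (fun n => ?_)
    exact div_mul_cancel₀ _ (hbpos n).ne'
  have hsinv : 0 < s⁻¹ := inv_pos.2 hs
  -- (b n / (t n + M)) ^ α → s ^ (-α), same with - M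
  have hkey : ∀ M' : ℝ, Tendsto (fun n => (b n / (t n + M')) ^ α) atTop (nhds (s ^ (-α))) := by
    intro M'
    have h2 : Tendsto (fun n => (t n + M') / b n) atTop (nhds s) := by
      have h3 : Tendsto (fun n => M' / b n) atTop (nhds 0) :=
        tendsto_const_nhds.div_atTop hbtop
      have := hts.add h3
      rw [add_zero] at this
      refine this.congr (fun n => ?_)
      rw [← add_div]
    have h4 : Tendsto (fun n => b n / (t n + M')) atTop (nhds s⁻¹) := by
      have := h2.inv₀ hs.ne'
      refine this.congr (fun n => ?_)
      rw [inv_div]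
    have h5 : Tendsto (fun n => (b n / (t n + M')) ^ α) atTop (nhds (s⁻¹ ^ α)) := by
      have hcont : ContinuousAt (fun x : ℝ => x ^ α) s⁻¹ :=
        Real.continuousAt_rpow_const _ _ (Or.inl hsinv.ne')
      exact hcont.tendsto.comp h4
    rwa [Real.inv_rpow hs.le, ← Real.rpow_neg hs.le] at h5
  -- main squeeze
  refine tendsto_of_squeeze_param' (fun δ hδ => ?_)
  -- choose ε
  have hcont1 : Tendsto (fun ε : ℝ => Real.exp (-((1+ε)/(1-ε) * s ^ (-α)))) (nhds 0) (nhds L) := by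
    have hd : ContinuousAt (fun ε : ℝ => (1+ε)/(1-ε)) 0 :=
      ContinuousAt.div (by fun_prop) (by fun_prop) (by norm_num)
    have : ContinuousAt (fun ε : ℝ => Real.exp (-((1+ε)/(1-ε) * s ^ (-α)))) 0 :=
      Real.continuous_exp.continuousAt.comp ((hd.mul continuousAt_const).neg)
    have h0 := this.tendsto
    norm_num at h0 ⊢
    exact h0
  have hcont2 : Tendsto (fun ε : ℝ => Real.exp (-((1-ε) * s ^ (-α)))) (nhds 0) (nhds L) := by
    have : ContinuousAt (fun ε : ℝ => Real.exp (-((1-ε) * s ^ (-α)))) 0 := by fun_prop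
    have h0 := this.tendsto
    norm_num at h0 ⊢
    exact h0
  have hev1 : ∀ᶠ ε in nhds (0:ℝ), L - δ < Real.exp (-((1+ε)/(1-ε) * s ^ (-α))) :=
    hcont1.eventually_const_lt (by linarith)
  have hev2 : ∀ᶠ ε in nhds (0:ℝ), Real.exp (-((1-ε) * s ^ (-α))) < L + δ :=
    hcont2.eventually_lt_const (by linarith)
  have hev3 : ∀ᶠ ε in nhds (0:ℝ), ε < 1/2 := eventually_lt_nhds (by norm_num)
  obtain ⟨ε, ⟨h1ε, h2ε, h3ε⟩, hεpos⟩ :=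
    (((hev1.and (hev2.and hev3)).filter_mono nhdsWithin_le_nhds).and
      (self_mem_nhdsWithin : Set.Ioi (0:ℝ) ∈ nhdsWithin 0 (Set.Ioi 0))).exists
  replace hεpos : (0:ℝ) < ε := hεpos
  have hε1 : ε < 1 := by linarith
  have h1mε : 0 < 1 - ε := by linarith
  refine ⟨fun n => Real.exp (-((1+ε)/(1-ε) * (b n / (t n - M)) ^ α)),
    fun n => Real.exp (-((1-ε) * (b n / (t n + M)) ^ α)),
    Real.exp (-((1+ε)/(1-ε) * s ^ (-α))), Real.exp (-((1-ε) * s ^ (-α))),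
    ?_, ?_, h1ε.le, h2ε.le, ?_⟩
  · have := hkey (-M)
    have h6 : Tendsto (fun n => (b n / (t n - M)) ^ α) atTop (nhds (s ^ (-α))) := by
      refine this.congr (fun n => ?_)
      rw [sub_eq_add_neg]
    exact (Real.continuous_exp.tendsto _).comp ((tendsto_const_nhds.mul h6).neg)
  · exact (Real.continuous_exp.tendsto _).comp ((tendsto_const_nhds.mul (hkey M)).neg)
  -- eventual two-sided bound
  · -- choose Y from the tail
    obtain ⟨Y, hY⟩ := eventually_atTop.1
      ((htail.eventually_const_lt (show 1 - ε < 1 by linarith)).and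
        (htail.eventually_lt_const (show 1 < 1 + ε by linarith)))
    -- smallness of survival eventually
    have hsm : Tendsto (fun n => (1+ε) * ((t n - M)/C₂) ^ (-α)) atTop (nhds 0) := by
      have h7 : Tendsto (fun n => (t n - M)/C₂) atTop atTop :=
        (httop.atTop_add tendsto_const_nhds).atTop_div_const (by linarith [hC₁.trans_le ((hσ 0).1.trans (hσ 0).2)])
      have := (tendsto_rpow_neg_atTop hα).comp h7
      simpa using tendsto_const_nhds.mul this
    have hC₂ : 0 < C₂ := hC₁.trans_le ((hσ 0).1.trans (hσ 0).2)
    filter_upwards [httop.eventually_ge_atTop (C₂ * Y + M),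
      hsm.eventually_lt_const hεpos,
      httop.eventually_gt_atTop M] with n hn1 hn2 hn3
    have htM : 0 < t n - M := by linarith
    have htM' : 0 < t n + M := by linarith
    -- per-index facts
    have hfacts : ∀ i ∈ Finset.range (p n),
        (1 - ε) * (σ i ^ α * (t n + M) ^ (-α)) ≤ S ((t n - c i) / σ i) ∧
        S ((t n - c i) / σ i) ≤ (1 + ε) * (σ i ^ α * (t n - M) ^ (-α)) ∧
        S ((t n - c i) / σ i) ≤ ε := by
      intro i _
      set y := (t n - c i) / σ i with hy
      have hci := abs_le.1 (hc i)
      have h8 : t n - M ≤ t n - c i := by linarith [hci.2]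
      have h9 : t n - c i ≤ t n + M := by linarith [hci.1]
      have hylb : (t n - M)/C₂ ≤ y := by
        rw [hy]
        gcongr <;> first | exact (hσ i).2 | linarith [hσpos i]
      have hybase : 0 < (t n - M)/C₂ := div_pos htM hC₂
      have hypos : 0 < y := hybase.trans_le hylb
      have hyY : Y ≤ y := by
        refine le_trans ?_ hylb
        rw [le_div_iff₀ hC₂]
        linarith
      obtain ⟨hsw1, hsw2⟩ := hY y hyY
      have hyα : 0 < y ^ α := Real.rpow_pos_of_pos hypos α
      have hyneg : y ^ (-α) = (y ^ α)⁻¹ := Real.rpow_neg hypos.le α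
      have hSyub : S y ≤ (1+ε) * y ^ (-α) := by
        rw [hyneg, mul_comm, ← div_eq_inv_mul, le_div_iff₀ hyα]
        nlinarith
      have hSylb : (1-ε) * y ^ (-α) ≤ S y := by
        rw [hyneg, mul_comm, ← div_eq_inv_mul, div_le_iff₀ hyα]
        nlinarith
      have hupb : y ≤ (t n + M)/σ i := by
        rw [hy]
        gcongr <;> first | exact h9 | linarith [hσpos i]
      have hlwb : (t n - M)/σ i ≤ y := by
        rw [hy]
        gcongr <;> first | exact h8 | linarith [hσpos i]
      have hconv : ∀ A : ℝ, 0 < A → ((A)/σ i) ^ (-α) = σ i ^ α * A ^ (-α) := by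
        intro A hA
        have h1 := Real.rpow_pos_of_pos hA α
        have h2 := Real.rpow_pos_of_pos (hσpos i) α
        rw [Real.rpow_neg (div_pos hA (hσpos i)).le, Real.div_rpow hA.le (hσpos i).le,
          Real.rpow_neg hA.le]
        field_simp
      have hInv1 : y ^ (-α) ≤ σ i ^ α * (t n - M) ^ (-α) := by
        rw [← hconv _ htM]
        exact rpow_anti hα (div_pos htM (hσpos i)) hlwb
      have hInv2 : σ i ^ α * (t n + M) ^ (-α) ≤ y ^ (-α) := by
        rw [← hconv _ htM']
        exact rpow_anti hα hypos hupb
      refine ⟨?_, ?_, ?_⟩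
      · calc (1 - ε) * (σ i ^ α * (t n + M) ^ (-α)) ≤ (1 - ε) * y ^ (-α) := by
              apply mul_le_mul_of_nonneg_left hInv2; linarith
          _ ≤ S y := hSylb
      · calc S y ≤ (1+ε) * y ^ (-α) := hSyub
          _ ≤ (1+ε) * (σ i ^ α * (t n - M) ^ (-α)) := by
              apply mul_le_mul_of_nonneg_left hInv1; linarith
      · calc S y ≤ (1+ε) * y ^ (-α) := hSyub
          _ ≤ (1+ε) * ((t n - M)/C₂) ^ (-α) := by
              apply mul_le_mul_of_nonneg_left (rpow_anti hα hybase hylb); linarith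
          _ ≤ ε := hn2.le
    -- now the two product bounds
    have hqeq : ∀ A : ℝ, 0 < A → (b n / A) ^ α =
        (∑ i ∈ Finset.range (p n), σ i ^ α) * A ^ (-α) := by
      intro A hA
      rw [Real.div_rpow (hbpos n).le hA.le, hbα n, Real.rpow_neg hA.le, div_eq_mul_inv]
    have hSnn : ∀ i ∈ Finset.range (p n), 0 ≤ 1 - S ((t n - c i) / σ i) := by
      intro i hi
      have := (hfacts i hi).2.2
      linarith
    constructor
    · -- lower bound
      calc Real.exp (-((1+ε)/(1-ε) * (b n / (t n - M)) ^ α))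
          ≤ Real.exp (∑ i ∈ Finset.range (p n), -(S ((t n - c i) / σ i) / (1-ε))) := by
            apply Real.exp_le_exp.2
            have hsum : ∑ i ∈ Finset.range (p n), S ((t n - c i) / σ i)
                ≤ (1+ε) * (b n / (t n - M)) ^ α := by
              calc ∑ i ∈ Finset.range (p n), S ((t n - c i) / σ i)
                  ≤ ∑ i ∈ Finset.range (p n), (1+ε) * (σ i ^ α * (t n - M) ^ (-α)) :=
                    Finset.sum_le_sum (fun i hi => (hfacts i hi).2.1)
                _ = (1+ε) * (b n / (t n - M)) ^ α := by
                    rw [hqeq _ htM, ← Finset.mul_sum, ← Finset.sum_mul]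
            have heqs : ∑ i ∈ Finset.range (p n), -(S ((t n - c i) / σ i) / (1-ε))
                = -((∑ i ∈ Finset.range (p n), S ((t n - c i) / σ i)) / (1-ε)) := by
              rw [Finset.sum_neg_distrib, ← Finset.sum_div]
            rw [heqs, neg_le_neg_iff, div_mul_eq_mul_div]
            exact (div_le_div_iff_of_pos_right h1mε).2 hsum
          _ = ∏ i ∈ Finset.range (p n), Real.exp (-(S ((t n - c i) / σ i) / (1-ε))) :=
            Real.exp_sum _ _
          _ ≤ ∏ i ∈ Finset.range (p n), Real.exp (-(S ((t n - c i) / σ i) /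
              (1 - S ((t n - c i) / σ i)))) := by
            refine Finset.prod_le_prod (fun i _ => (Real.exp_pos _).le) (fun i hi => ?_)
            apply Real.exp_le_exp.2
            rw [neg_le_neg_iff]
            exact div_le_div_of_nonneg_left (hS0 _) h1mε (by linarith [(hfacts i hi).2.2])
          _ ≤ ∏ i ∈ Finset.range (p n), (1 - S ((t n - c i) / σ i)) := by
            refine Finset.prod_le_prod (fun i _ => (Real.exp_pos _).le) (fun i hi => ?_)
            exact exp_neg_div_le_one_sub' (by linarith [(hfacts i hi).2.2])
    · -- upper bound
      calc ∏ i ∈ Finset.range (p n), (1 - S ((t n - c i) / σ i))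
          ≤ ∏ i ∈ Finset.range (p n), Real.exp (-(S ((t n - c i) / σ i))) :=
            Finset.prod_le_prod hSnn (fun i _ => one_sub_le_exp_neg' _)
          _ = Real.exp (∑ i ∈ Finset.range (p n), -(S ((t n - c i) / σ i))) :=
            (Real.exp_sum _ _).symm
          _ ≤ Real.exp (-((1-ε) * (b n / (t n + M)) ^ α)) := by
            apply Real.exp_le_exp.2
            have hsum : (1-ε) * (b n / (t n + M)) ^ α
                ≤ ∑ i ∈ Finset.range (p n), S ((t n - c i) / σ i) := by
              calc (1-ε) * (b n / (t n + M)) ^ α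
                  = ∑ i ∈ Finset.range (p n), (1-ε) * (σ i ^ α * (t n + M) ^ (-α)) := by
                    rw [hqeq _ htM', ← Finset.mul_sum, ← Finset.sum_mul]
                _ ≤ _ := Finset.sum_le_sum (fun i hi => (hfacts i hi).1)
            rw [Finset.sum_neg_distrib, neg_le_neg_iff]
            exact hsum

lemma normConst_atTop (α C₁ C₂ : ℝ) (hα : 0 < α) (hC₁ : 0 < C₁)
    (σ : ℕ → ℝ) (hσ : ∀ i, σ i ∈ Set.Icc C₁ C₂)
    (p : ℕ → ℕ) (hp : Tendsto (fun n => (p n : ℝ)) atTop atTop) :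
    Tendsto (fun n => (∑ i ∈ Finset.range (p n), σ i ^ α) ^ (1/α : ℝ)) atTop atTop := by
  have hlow : ∀ n, ((p n : ℝ) * C₁ ^ α) ^ (1/α : ℝ)
      ≤ (∑ i ∈ Finset.range (p n), σ i ^ α) ^ (1/α : ℝ) := by
    intro n
    apply Real.rpow_le_rpow (by positivity) ?_ (by positivity)
    have h := Finset.card_nsmul_le_sum (Finset.range (p n)) (fun i => σ i ^ α) (C₁ ^ α)
      (fun i _ => Real.rpow_le_rpow hC₁.le (hσ i).1 hα.le)
    simpa [nsmul_eq_mul] using h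
  have hl : Tendsto (fun n => ((p n : ℝ) * C₁ ^ α) ^ (1/α : ℝ)) atTop atTop := by
    have h1 : Tendsto (fun n => (p n : ℝ) * C₁ ^ α) atTop atTop :=
      hp.atTop_mul_const (by positivity)
    exact (tendsto_rpow_atTop (by positivity)).comp h1
  exact tendsto_atTop_mono hlow hl

def mixSets (d : ℕ) (c₁ c₂ : ℕ → ℝ) : ∀ k, Set (mixCodom d k)
  | Sum.inl _ => (Set.univ : Set (Fin d → ℝ))
  | Sum.inr (Sum.inl i) => (Set.Iic (c₁ i) : Set ℝ)
  | Sum.inr (Sum.inr j) => (Set.Iic (c₂ j) : Set ℝ)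

lemma factorization_measure
    {Ω : Type*} [MeasurableSpace Ω] (P : Measure Ω) [IsProbabilityMeasure P]
    (d : ℕ) (Z : Ω → Fin d → ℝ) (hZm : Measurable Z)
    (ε₁ ε₂ : ℕ → Ω → ℝ) (hε₁m : ∀ i, Measurable (ε₁ i)) (hε₂m : ∀ j, Measurable (ε₂ j))
    (hid₁ : ∀ i, IdentDistrib (ε₁ i) (ε₁ 0) P P)
    (hid₂ : ∀ j, IdentDistrib (ε₂ j) (ε₂ 0) P P)
    (hindep : iIndepFun (m := fun i => mixCodomMeasurableSpace d i) (mixFun Z ε₁ ε₂) P)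
    (p₁ p₂ : ℕ) (γ₁ γ₂ : ℕ → (Fin d → ℝ) → ℝ)
    (hγ₁ : ∀ i, Measurable (γ₁ i)) (hγ₂ : ∀ j, Measurable (γ₂ j)) :
    P {ω | (∀ i < p₁, ε₁ i ω ≤ γ₁ i (Z ω)) ∧ (∀ j < p₂, ε₂ j ω ≤ γ₂ j (Z ω))}
      = ∫⁻ z, (∏ i ∈ Finset.range p₁, P {ω | ε₁ 0 ω ≤ γ₁ i z}) *
              (∏ j ∈ Finset.range p₂, P {ω | ε₂ 0 ω ≤ γ₂ j z}) ∂(P.map Z) := by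
  classical
  have mMeas : ∀ k, Measurable (mixFun Z ε₁ ε₂ k) := by
    rintro (⟨⟩ | i | j)
    · exact hZm
    · exact hε₁m i
    · exact hε₂m j
  set V : Ω → (Fin p₁ → ℝ) × (Fin p₂ → ℝ) :=
    fun ω => (fun i => ε₁ i ω, fun j => ε₂ j ω) with hV
  have hVm : Measurable V := by
    refine Measurable.prod ?_ ?_
    · exact measurable_pi_lambda _ (fun i => hε₁m i)
    · exact measurable_pi_lambda _ (fun j => hε₂m j)
  -- the index finsets
  set T₁ : Finset (Unit ⊕ ℕ ⊕ ℕ) := (Finset.range p₁).image (fun i => Sum.inr (Sum.inl i)) with hT₁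
  set T₂ : Finset (Unit ⊕ ℕ ⊕ ℕ) := (Finset.range p₂).image (fun j => Sum.inr (Sum.inr j)) with hT₂
  set T : Finset (Unit ⊕ ℕ ⊕ ℕ) := T₁ ∪ T₂ with hT
  have hmemT₁ : ∀ i : Fin p₁, Sum.inr (Sum.inl (i : ℕ)) ∈ T := by
    intro i
    refine Finset.mem_union_left _ ?_
    simp [hT₁, i.2]
  have hmemT₂ : ∀ j : Fin p₂, Sum.inr (Sum.inr (j : ℕ)) ∈ T := by
    intro j
    refine Finset.mem_union_right _ ?_
    simp [hT₂, j.2]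
  -- independence of Z and V
  have hZV : IndepFun Z V P := by
    have hST : Disjoint ({Sum.inl ()} : Finset (Unit ⊕ ℕ ⊕ ℕ)) T := by
      simp [Finset.disjoint_left, hT, hT₁, hT₂]
    have h0 := hindep.indepFun_finset {Sum.inl ()} T hST mMeas
    have hφ : Measurable (fun v : (∀ k : ({Sum.inl ()} : Finset (Unit ⊕ ℕ ⊕ ℕ)), mixCodom d k) =>
        (v ⟨Sum.inl (), Finset.mem_singleton_self _⟩ : Fin d → ℝ)) := measurable_pi_apply _
    have hψ : Measurable (fun w : (∀ k : T, mixCodom d k) =>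
        ((fun i : Fin p₁ => (w ⟨Sum.inr (Sum.inl i), hmemT₁ i⟩ : ℝ),
          fun j : Fin p₂ => (w ⟨Sum.inr (Sum.inr j), hmemT₂ j⟩ : ℝ)) :
          (Fin p₁ → ℝ) × (Fin p₂ → ℝ))) := by
      refine Measurable.prod ?_ ?_
      · exact measurable_pi_lambda _ (fun i => measurable_pi_apply _)
      · exact measurable_pi_lambda _ (fun j => measurable_pi_apply _)
    exact h0.comp hφ hψ
  -- the event as a preimage
  set SS : Set ((Fin d → ℝ) × ((Fin p₁ → ℝ) × (Fin p₂ → ℝ))) :=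
    {q | (∀ i : Fin p₁, q.2.1 i ≤ γ₁ i q.1) ∧ (∀ j : Fin p₂, q.2.2 j ≤ γ₂ j q.1)} with hSS
  have hSSm : MeasurableSet SS := by
    rw [hSS, Set.setOf_and]
    refine MeasurableSet.inter ?_ ?_ <;> rw [Set.setOf_forall] <;>
      refine MeasurableSet.iInter (fun i => ?_)
    · exact measurableSet_le (measurable_snd.fst.eval) ((hγ₁ i).comp measurable_fst)
    · exact measurableSet_le (measurable_snd.snd.eval) ((hγ₂ i).comp measurable_fst)
  have hpre : {ω | (∀ i < p₁, ε₁ i ω ≤ γ₁ i (Z ω)) ∧ (∀ j < p₂, ε₂ j ω ≤ γ₂ j (Z ω))}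
      = (fun ω => (Z ω, V ω)) ⁻¹' SS := by
    ext ω
    simp only [hSS, hV, Set.mem_setOf_eq, Set.mem_preimage]
    constructor
    · rintro ⟨h1, h2⟩; exact ⟨fun i => h1 i i.2, fun j => h2 j j.2⟩
    · rintro ⟨h1, h2⟩; exact ⟨fun i hi => h1 ⟨i, hi⟩, fun j hj => h2 ⟨j, hj⟩⟩
  have hmap : P.map (fun ω => (Z ω, V ω)) = (P.map Z).prod (P.map V) :=
    (indepFun_iff_map_prod_eq_prod_map_map hZm.aemeasurable hVm.aemeasurable).1 hZV
  rw [hpre, ← Measure.map_apply (hZm.prodMk hVm) hSSm, hmap, Measure.prod_apply hSSm]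
  refine lintegral_congr (fun z => ?_)
  -- compute the slice measure via independence of the noise variables
  rw [Measure.map_apply hVm (measurable_prodMk_left hSSm)]
  have hEq : V ⁻¹' (Prod.mk z ⁻¹' SS) = ⋂ k ∈ T,
      mixFun Z ε₁ ε₂ k ⁻¹' mixSets d (fun i => γ₁ i z) (fun j => γ₂ j z) k := by
    ext ω
    simp only [Set.mem_preimage, hSS, hV, Set.mem_setOf_eq, Set.mem_iInter]
    constructor
    · rintro ⟨h1, h2⟩ k hk
      rw [hT, Finset.mem_union] at hk
      rcases hk with hk | hk
      · rw [hT₁, Finset.mem_image] at hk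
        obtain ⟨i, hi, rfl⟩ := hk
        exact h1 ⟨i, Finset.mem_range.1 hi⟩
      · rw [hT₂, Finset.mem_image] at hk
        obtain ⟨j, hj, rfl⟩ := hk
        exact h2 ⟨j, Finset.mem_range.1 hj⟩
    · intro h
      exact ⟨fun i => h _ (hmemT₁ i), fun j => h _ (hmemT₂ j)⟩
  have hsetsm : ∀ k, k ∈ T → MeasurableSet[mixCodomMeasurableSpace d k] (mixSets d (fun i => γ₁ i z) (fun j => γ₂ j z) k) := by
    rintro (⟨⟩ | i | j) _
    · exact MeasurableSet.univ
    · exact (measurableSet_Iic : MeasurableSet (Set.Iic (γ₁ i z)))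
    · exact (measurableSet_Iic : MeasurableSet (Set.Iic (γ₂ j z)))
  have hprodeq := iIndepFun_iff_measure_inter_preimage_eq_mul.1 hindep T hsetsm
  rw [hEq, hprodeq]
  have hdisj : Disjoint T₁ T₂ := by
    simp [Finset.disjoint_left, hT₁, hT₂]
  rw [hT, Finset.prod_union hdisj]
  congr 1
  · rw [hT₁, Finset.prod_image (fun a _ b _ h => by simpa using h)]
    refine Finset.prod_congr rfl (fun i _ => ?_)
    exact (hid₁ i).measure_mem_eq measurableSet_Iic
  · rw [hT₂, Finset.prod_image (fun a _ b _ h => by simpa using h)]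
    refine Finset.prod_congr rfl (fun j _ => ?_)
    exact (hid₂ j).measure_mem_eq measurableSet_Iic

lemma cdf_one_sub {Ω : Type*} [MeasurableSpace Ω] (P : Measure Ω) [IsProbabilityMeasure P]
    (e : Ω → ℝ) (he : Measurable e) (y : ℝ) :
    (P {ω | e ω ≤ y}).toReal = 1 - (P {ω | y < e ω}).toReal := by
  have h1 : {ω | e ω ≤ y} = {ω | y < e ω}ᶜ := by ext ω; simp [not_lt]
  have hms : MeasurableSet {ω | y < e ω} := measurableSet_lt measurable_const he
  rw [h1, prob_compl_eq_one_sub hms, ENNReal.toReal_sub_of_le prob_le_one ENNReal.one_ne_top,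
    ENNReal.toReal_one]

lemma cdf_monotone {Ω : Type*} [MeasurableSpace Ω] (P : Measure Ω) [IsProbabilityMeasure P]
    (e : Ω → ℝ) : Monotone (fun y => (P {ω | e ω ≤ y}).toReal) := by
  intro y₁ y₂ h
  exact ENNReal.toReal_mono (measure_ne_top _ _)
    (measure_mono (fun ω hω => le_trans hω h))

lemma cdf_le_one {Ω : Type*} [MeasurableSpace Ω] (P : Measure Ω) [IsProbabilityMeasure P]
    (e : Ω → ℝ) (y : ℝ) : (P {ω | e ω ≤ y}).toReal ≤ 1 := by
  rw [← ENNReal.toReal_one]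
  exact ENNReal.toReal_mono ENNReal.one_ne_top prob_le_one

/-- Prop. 2, Case 2, first subcase: `α₁ = α₂ = α`, `p₁/p₂ → C > 0`, `a₁/a₂ → a > 0` imply `P(Q ≤ a₁ x) → Ψ_α(x)·Ψ_α(a x)` for all `x > 0`. -/
theorem prop2_case2_sub1
    {Ω : Type*} [MeasurableSpace Ω] (P : Measure Ω) [IsProbabilityMeasure P]
    (d : ℕ) (Z : Ω → Fin d → ℝ) (hZm : Measurable Z)
    (f g : ℕ → (Fin d → ℝ) → ℝ) (hfm : ∀ i, Measurable (f i)) (hgm : ∀ j, Measurable (g j))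
    (hfbdd : ∀ᵐ ω ∂P, ∃ M : ℝ, ∀ i, |f i (Z ω)| ≤ M)
    (hgbdd : ∀ᵐ ω ∂P, ∃ M : ℝ, ∀ j, |g j (Z ω)| ≤ M)
    (C₁ C₂ : ℝ) (hC₁ : 0 < C₁) (hC₁₂ : C₁ ≤ C₂)
    (σ σt : ℕ → ℝ) (hσ : ∀ i, σ i ∈ Set.Icc C₁ C₂) (hσt : ∀ j, σt j ∈ Set.Icc C₁ C₂)
    (α₁ α₂ : ℝ) (hα₁ : 0 < α₁) (hα₂ : 0 < α₂)
    (ε₁ ε₂ : ℕ → Ω → ℝ) (hε₁m : ∀ i, Measurable (ε₁ i)) (hε₂m : ∀ j, Measurable (ε₂ j))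
    (hid₁ : ∀ i, IdentDistrib (ε₁ i) (ε₁ 0) P P)
    (hid₂ : ∀ j, IdentDistrib (ε₂ j) (ε₂ 0) P P)
    (hindep : iIndepFun (m := fun i => mixCodomMeasurableSpace d i) (mixFun Z ε₁ ε₂) P)
    (htail₁ : Tendsto (fun x : ℝ => x ^ α₁ * (P {ω | x < ε₁ 0 ω}).toReal) atTop (nhds 1))
    (htail₂ : Tendsto (fun x : ℝ => x ^ α₂ * (P {ω | x < ε₂ 0 ω}).toReal) atTop (nhds 1))
    (X₁ X₂ : ℕ → Ω → ℝ)
    (hX₁ : ∀ i ω, X₁ i ω = f i (Z ω) + σ i * ε₁ i ω)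
    (hX₂ : ∀ j ω, X₂ j ω = g j (Z ω) + σt j * ε₂ j ω)
    (p₁ p₂ : ℕ → ℕ) (hp₁pos : ∀ n, 0 < p₁ n) (hp₂pos : ∀ n, 0 < p₂ n)
    (hp₁ : Tendsto (fun n => (p₁ n : ℝ)) atTop atTop)
    (hp₂ : Tendsto (fun n => (p₂ n : ℝ)) atTop atTop)
    (α : ℝ) (hα₁α : α₁ = α) (hα₂α : α₂ = α)
    (C : ℝ) (hC : 0 < C)
    (hratio : Tendsto (fun n => (p₁ n : ℝ) / (p₂ n : ℝ)) atTop (nhds C))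
    (a : ℝ) (ha : 0 < a)
    (hnorm : Tendsto (fun n => normConst σ α₁ (p₁ n) / normConst σt α₂ (p₂ n)) atTop (nhds a)) :
    ∀ x : ℝ, 0 < x →
      Tendsto (fun n => (P {ω | Qmax X₁ X₂ (p₁ n) (p₂ n) ω ≤ normConst σ α₁ (p₁ n) * x}).toReal) atTop
        (nhds (frechetCDF α x * frechetCDF α (a * x))) := by
  subst hα₂α
  subst hα₁α
  intro x hx
  classical
  have hσpos : ∀ i, 0 < σ i := fun i => hC₁.trans_le (hσ i).1
  have hσtpos : ∀ j, 0 < σt j := fun j => hC₁.trans_le (hσt j).1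
  set t : ℕ → ℝ := fun n => normConst σ α₁ (p₁ n) * x with htdef
  have hb₁pos : ∀ n, 0 < normConst σ α₁ (p₁ n) := by
    intro n
    apply Real.rpow_pos_of_pos
    refine Finset.sum_pos (fun i _ => Real.rpow_pos_of_pos (hσpos i) α₁) ?_
    exact Finset.nonempty_range_iff.2 (hp₁pos n).ne'
  -- the event rewritten through the noise variables
  have hevent : ∀ n, {ω | Qmax X₁ X₂ (p₁ n) (p₂ n) ω ≤ normConst σ α₁ (p₁ n) * x}
      = {ω | (∀ i < p₁ n, ε₁ i ω ≤ (t n - f i (Z ω)) / σ i) ∧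
             (∀ j < p₂ n, ε₂ j ω ≤ (t n - g j (Z ω)) / σt j)} := by
    intro n
    have ht : t n = normConst σ α₁ (p₁ n) * x := by rw [htdef]
    ext ω
    have h1 : Nonempty (Fin (p₁ n)) := ⟨⟨0, hp₁pos n⟩⟩
    have h2 : Nonempty (Fin (p₂ n)) := ⟨⟨0, hp₂pos n⟩⟩
    simp only [Qmax, Set.mem_setOf_eq, max_le_iff,
      ciSup_le_iff (Set.Finite.bddAbove (Set.finite_range _))]
    constructor
    · rintro ⟨ha1, ha2⟩
      refine ⟨fun i hi => ?_, fun j hj => ?_⟩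
      · have h3 := ha1 ⟨i, hi⟩
        rw [hX₁ i ω] at h3
        rw [le_div_iff₀ (hσpos i)]
        nlinarith
      · have h3 := ha2 ⟨j, hj⟩
        rw [hX₂ j ω] at h3
        rw [le_div_iff₀ (hσtpos j)]
        nlinarith
    · rintro ⟨ha1, ha2⟩
      refine ⟨fun i => ?_, fun j => ?_⟩
      · have h3 := ha1 i i.2
        rw [le_div_iff₀ (hσpos i)] at h3
        rw [hX₁ i ω]
        nlinarith
      · have h3 := ha2 j j.2
        rw [le_div_iff₀ (hσtpos j)] at h3
        rw [hX₂ j ω]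
        nlinarith
  -- factorized form
  have hPn : ∀ n, P {ω | Qmax X₁ X₂ (p₁ n) (p₂ n) ω ≤ normConst σ α₁ (p₁ n) * x}
      = ∫⁻ z, (∏ i ∈ Finset.range (p₁ n), P {ω | ε₁ 0 ω ≤ (t n - f i z) / σ i}) *
              (∏ j ∈ Finset.range (p₂ n), P {ω | ε₂ 0 ω ≤ (t n - g j z) / σt j}) ∂(P.map Z) := by
    intro n
    rw [hevent n]
    exact factorization_measure P d Z hZm ε₁ ε₂ hε₁m hε₂m hid₁ hid₂ hindep (p₁ n) (p₂ n)
      (fun i z => (t n - f i z) / σ i) (fun j z => (t n - g j z) / σt j)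
      (fun i => (measurable_const.sub (hfm i)).div_const _)
      (fun j => (measurable_const.sub (hgm j)).div_const _)
  -- real-valued integrand
  set G : ℕ → (Fin d → ℝ) → ℝ := fun n z =>
    (∏ i ∈ Finset.range (p₁ n), (P {ω | ε₁ 0 ω ≤ (t n - f i z) / σ i}).toReal) *
    (∏ j ∈ Finset.range (p₂ n), (P {ω | ε₂ 0 ω ≤ (t n - g j z) / σt j}).toReal) with hGdef
  have hGle1 : ∀ n z, G n z ≤ 1 := by
    intro n z
    rw [hGdef]
    calc (∏ i ∈ Finset.range (p₁ n), (P {ω | ε₁ 0 ω ≤ (t n - f i z) / σ i}).toReal) *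
        (∏ j ∈ Finset.range (p₂ n), (P {ω | ε₂ 0 ω ≤ (t n - g j z) / σt j}).toReal) ≤ 1 * 1 := by
          apply mul_le_mul ?_ ?_ (Finset.prod_nonneg (fun i _ => ENNReal.toReal_nonneg)) zero_le_one
          · exact Finset.prod_le_one (fun i _ => ENNReal.toReal_nonneg)
              (fun i _ => cdf_le_one P (ε₁ 0) _)
          · exact Finset.prod_le_one (fun i _ => ENNReal.toReal_nonneg)
              (fun i _ => cdf_le_one P (ε₂ 0) _)
      _ = 1 := one_mul 1
  -- the integrand in ℝ≥0∞ form
  have hofReal : ∀ n z,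
      (∏ i ∈ Finset.range (p₁ n), P {ω | ε₁ 0 ω ≤ (t n - f i z) / σ i}) *
        (∏ j ∈ Finset.range (p₂ n), P {ω | ε₂ 0 ω ≤ (t n - g j z) / σt j})
      = ENNReal.ofReal (G n z) := by
    intro n z
    rw [hGdef, ENNReal.ofReal_mul (Finset.prod_nonneg (fun i _ => ENNReal.toReal_nonneg)),
      ENNReal.ofReal_prod_of_nonneg (fun i _ => ENNReal.toReal_nonneg),
      ENNReal.ofReal_prod_of_nonneg (fun j _ => ENNReal.toReal_nonneg)]
    congr 1 <;> refine Finset.prod_congr rfl (fun i _ => ?_) <;>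
      rw [ENNReal.ofReal_toReal (measure_ne_top P _)]
  -- norming constants diverge
  have hb₁top : Tendsto (fun n => normConst σ α₁ (p₁ n)) atTop atTop :=
    normConst_atTop α₁ C₁ C₂ hα₁ hC₁ σ hσ p₁ hp₁
  have hb₂top : Tendsto (fun n => normConst σt α₁ (p₂ n)) atTop atTop :=
    normConst_atTop α₁ C₁ C₂ hα₁ hC₁ σt hσt p₂ hp₂
  -- ratios
  have hts1 : Tendsto (fun n => t n / normConst σ α₁ (p₁ n)) atTop (nhds x) := by
    refine tendsto_const_nhds.congr (fun n => ?_)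
    rw [htdef]
    exact (mul_div_cancel_left₀ x (hb₁pos n).ne').symm
  have hts2 : Tendsto (fun n => t n / normConst σt α₁ (p₂ n)) atTop (nhds (a * x)) := by
    have h1 := hnorm.mul_const x
    refine h1.congr (fun n => ?_)
    rw [htdef]
    ring
  -- a.e. boundedness of the factor loadings under the law of Z
  have haeZ : ∀ᵐ z ∂(P.map Z),
      (∃ M : ℝ, ∀ i, |f i z| ≤ M) ∧ (∃ M : ℝ, ∀ j, |g j z| ≤ M) := by
    have hms : MeasurableSet {z : Fin d → ℝ |
        (∃ M : ℝ, ∀ i, |f i z| ≤ M) ∧ (∃ M : ℝ, ∀ j, |g j z| ≤ M)} := by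
      have hr : ∀ (h : ℕ → (Fin d → ℝ) → ℝ), (∀ i, Measurable (h i)) →
          MeasurableSet {z : Fin d → ℝ | ∃ M : ℝ, ∀ i, |h i z| ≤ M} := by
        intro h hm
        have heq : {z : Fin d → ℝ | ∃ M : ℝ, ∀ i, |h i z| ≤ M}
            = ⋃ m : ℕ, ⋂ i : ℕ, {z | |h i z| ≤ (m : ℝ)} := by
          ext z
          simp only [Set.mem_setOf_eq, Set.mem_iUnion, Set.mem_iInter]
          constructor
          · rintro ⟨M, hM⟩
            obtain ⟨m, hm'⟩ := exists_nat_ge M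
            exact ⟨m, fun i => (hM i).trans hm'⟩
          · rintro ⟨m, hm'⟩
            exact ⟨m, hm'⟩
        rw [heq]
        exact MeasurableSet.iUnion (fun m => MeasurableSet.iInter (fun i =>
          measurableSet_le (hm i).abs measurable_const))
      rw [Set.setOf_and]
      exact (hr f hfm).inter (hr g hgm)
    rw [ae_map_iff hZm.aemeasurable hms]
    exact hfbdd.and hgbdd
  -- pointwise convergence of the real integrand
  have hL0 : (0:ℝ) ≤ Real.exp (-x ^ (-α₁)) * Real.exp (-(a*x) ^ (-α₁)) :=
    mul_nonneg (Real.exp_pos _).le (Real.exp_pos _).le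
  have hpt : ∀ᵐ z ∂(P.map Z), Tendsto (fun n => G n z) atTop
      (nhds (Real.exp (-x ^ (-α₁)) * Real.exp (-(a*x) ^ (-α₁)))) := by
    filter_upwards [haeZ] with z hz
    obtain ⟨⟨M₁, hM₁⟩, ⟨M₂, hM₂⟩⟩ := hz
    set M := max (max M₁ M₂) 0 with hMdef
    have hM : 0 ≤ M := le_max_right _ _
    have hc₁ : ∀ i, |f i z| ≤ M := fun i =>
      (hM₁ i).trans ((le_max_left _ _).trans (le_max_left _ _))
    have hc₂ : ∀ j, |g j z| ≤ M := fun j =>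
      (hM₂ j).trans ((le_max_right _ _).trans (le_max_left _ _))
    have h1 : Tendsto (fun n => ∏ i ∈ Finset.range (p₁ n),
        (1 - (P {ω | ((t n - f i z) / σ i) < ε₁ 0 ω}).toReal)) atTop
        (nhds (Real.exp (-x ^ (-α₁)))) :=
      core_prod_tendsto α₁ hα₁ (fun y => (P {ω | y < ε₁ 0 ω}).toReal)
        (fun y => ENNReal.toReal_nonneg) htail₁ C₁ C₂ hC₁ σ hσ M hM
        (fun i => f i z) hc₁ p₁ hp₁pos t x hx hts1 hb₁top
    have h2 : Tendsto (fun n => ∏ j ∈ Finset.range (p₂ n),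
        (1 - (P {ω | ((t n - g j z) / σt j) < ε₂ 0 ω}).toReal)) atTop
        (nhds (Real.exp (-(a*x) ^ (-α₁)))) :=
      core_prod_tendsto α₁ hα₁ (fun y => (P {ω | y < ε₂ 0 ω}).toReal)
        (fun y => ENNReal.toReal_nonneg) htail₂ C₁ C₂ hC₁ σt hσt M hM
        (fun j => g j z) hc₂ p₂ hp₂pos t (a * x) (mul_pos ha hx) hts2 hb₂top
    refine (h1.mul h2).congr (fun n => ?_)
    rw [hGdef]
    congr 1 <;> refine Finset.prod_congr rfl (fun i _ => ?_)
    · rw [cdf_one_sub P _ (hε₁m 0)]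
    · rw [cdf_one_sub P _ (hε₂m 0)]
  -- measurability of the ℝ≥0∞ integrands
  have hGmeas : ∀ n, Measurable (fun z => ENNReal.ofReal (G n z)) := by
    intro n
    apply Measurable.ennreal_ofReal
    rw [hGdef]
    apply Measurable.mul <;> refine Finset.measurable_prod _ (fun i _ => ?_)
    · exact (cdf_monotone P (ε₁ 0)).measurable.comp
        ((measurable_const.sub (hfm i)).div_const _)
    · exact (cdf_monotone P (ε₂ 0)).measurable.comp
        ((measurable_const.sub (hgm i)).div_const _)
  -- dominated convergence
  have hPZprob : IsProbabilityMeasure (P.map Z) := Measure.isProbabilityMeasure_map hZm.aemeasurable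
  have hdct : Tendsto (fun n => ∫⁻ z, ENNReal.ofReal (G n z) ∂(P.map Z)) atTop
      (nhds (ENNReal.ofReal (Real.exp (-x ^ (-α₁)) * Real.exp (-(a*x) ^ (-α₁))))) := by
    have hintlim : ∫⁻ (_ : Fin d → ℝ),
        ENNReal.ofReal (Real.exp (-x ^ (-α₁)) * Real.exp (-(a*x) ^ (-α₁))) ∂(P.map Z)
        = ENNReal.ofReal (Real.exp (-x ^ (-α₁)) * Real.exp (-(a*x) ^ (-α₁))) := by
      simp [lintegral_const]
    rw [← hintlim]
    refine tendsto_lintegral_of_dominated_convergence (fun _ => 1) hGmeas ?_ ?_ ?_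
    · intro n
      exact Filter.Eventually.of_forall (fun z => ENNReal.ofReal_le_one.2 (hGle1 n z))
    · simp
    · filter_upwards [hpt] with z hz
      exact (ENNReal.continuous_ofReal.tendsto _).comp hz
  -- conclude
  have hfinal : Tendsto (fun n =>
      P {ω | Qmax X₁ X₂ (p₁ n) (p₂ n) ω ≤ normConst σ α₁ (p₁ n) * x}) atTop
      (nhds (ENNReal.ofReal (Real.exp (-x ^ (-α₁)) * Real.exp (-(a*x) ^ (-α₁))))) := by
    refine hdct.congr (fun n => ?_)
    rw [hPn n]
    exact (lintegral_congr (fun z => hofReal n z)).symm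
  have htoReal := (ENNReal.tendsto_toReal (ENNReal.ofReal_ne_top)).comp hfinal
  rw [ENNReal.toReal_ofReal hL0] at htoReal
  have hfre : frechetCDF α₁ x * frechetCDF α₁ (a * x)
      = Real.exp (-x ^ (-α₁)) * Real.exp (-(a*x) ^ (-α₁)) := by
    rw [frechetCDF, frechetCDF, if_pos hx, if_pos (mul_pos ha hx)]
  rw [hfre]
  exact htoReal
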